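/- Let I = [a, b] with a < b, let (n_i)_{i≥1} and (r_i)_{i≥1} be arbitrary sequences of natural numbers, and let (ε_i)_{i≥1} be a sequence of real numbers with ε_i → 0. Then there exists a continuous function f : I → ℝ such that for every i ≥ 1, inf_{s ∈ 𝓢_{n_i, r_i}(I) ∩ C(I)} sup_{t ∈ I} |f(t) − s(t)| ≥ ε_i. -/
import Mathlib


open MeasureTheory

/-- `SplineSet n r a b` is the set `𝓢_{n,r}([a,b])` of polynomial splines of degree `≤ n` with
`r` free knots on `[a, b]`: there are points `a = t_0 ≤ t_1 ≤ … ≤ t_r ≤ t_{r+1} = b` such that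
on each `[t_j, t_{j+1}]` the function coincides with a polynomial of degree `≤ n`. -/
def SplineSet (n r : ℕ) (a b : ℝ) : Set (ℝ → ℝ) :=
  { s | ∃ t : Fin (r + 2) → ℝ, Monotone t ∧ t 0 = a ∧ t (Fin.last (r + 1)) = b ∧
        ∀ j : Fin (r + 1), ∃ p : Polynomial ℝ, p.natDegree ≤ n ∧
          ∀ x ∈ Set.Icc (t j.castSucc) (t j.succ), s x = p.eval x }

section auxSpline
open Filter Finset Real



noncomputable def hatf (m : ℕ) (v : ℝ) : ℝ := min 1 (max 0 ((m:ℝ)+1 - v))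

lemma hatf_nonneg (m : ℕ) (v : ℝ) : 0 ≤ hatf m v := le_min zero_le_one (le_max_left _ _)

lemma hatf_le_one (m : ℕ) (v : ℝ) : hatf m v ≤ 1 := min_le_left _ _

lemma hatf_continuous (m : ℕ) : Continuous (hatf m) := by
  unfold hatf; fun_prop

lemma hatf_eq_zero {m : ℕ} {v : ℝ} (h : (m:ℝ)+1 ≤ v) : hatf m v = 0 := by
  unfold hatf
  rw [max_eq_left (by linarith), min_eq_right (by linarith)]

lemma hatf_eq_one {m : ℕ} {v : ℝ} (h : v ≤ (m:ℝ)) : hatf m v = 1 := by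
  unfold hatf
  rw [max_eq_right (by linarith), min_eq_left (by linarith)]

lemma telescope_summable {A : ℕ → ℝ} (hA : Antitone A) (h0 : ∀ m, 0 ≤ A m) :
    Summable (fun m => A m - A (m+1)) := by
  apply summable_of_sum_range_le (c := A 0)
    (fun m => sub_nonneg.2 (hA (Nat.le_succ m)))
  intro M
  rw [Finset.sum_range_sub' (fun i => A i) M]
  linarith [h0 M]

lemma hasSum_max {A : ℕ → ℝ} (hA : Antitone A) (hlim : Tendsto A atTop (nhds 0)) (K : ℕ) :
    HasSum (fun m => A (max m K) - A (max (m+1) K)) (A K) := by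
  have hnn : ∀ m : ℕ, 0 ≤ A (max m K) - A (max (m+1) K) :=
    fun m => sub_nonneg.2 (hA (max_le_max (Nat.le_succ m) le_rfl))
  rw [hasSum_iff_tendsto_nat_of_nonneg hnn]
  have hsum : ∀ M, ∑ i ∈ Finset.range M, (A (max i K) - A (max (i+1) K))
      = A K - A (max M K) := by
    intro M
    have := Finset.sum_range_sub' (fun i => A (max i K)) M
    simpa using this
  simp_rw [hsum]
  have h2 : Tendsto (fun M => A (max M K)) atTop (nhds 0) := by
    apply hlim.congr'
    filter_upwards [eventually_ge_atTop K] with M hM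
    rw [max_eq_left hM]
  simpa using tendsto_const_nhds.sub h2

noncomputable def envf (A : ℕ → ℝ) (v : ℝ) : ℝ := ∑' m, (A m - A (m+1)) * hatf m v

lemma envf_summable {A : ℕ → ℝ} (hA : Antitone A) (h0 : ∀ m, 0 ≤ A m) (v : ℝ) :
    Summable (fun m => (A m - A (m+1)) * hatf m v) := by
  apply Summable.of_nonneg_of_le
    (fun m => mul_nonneg (sub_nonneg.2 (hA (Nat.le_succ m))) (hatf_nonneg m v))
    (fun m => ?_) (telescope_summable hA h0)
  calc (A m - A (m+1)) * hatf m v ≤ (A m - A (m+1)) * 1 :=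
        mul_le_mul_of_nonneg_left (hatf_le_one m v) (sub_nonneg.2 (hA (Nat.le_succ m)))
    _ = A m - A (m+1) := mul_one _

lemma envf_continuous {A : ℕ → ℝ} (hA : Antitone A) (h0 : ∀ m, 0 ≤ A m) :
    Continuous (envf A) := by
  apply continuous_tsum (u := fun m => A m - A (m+1))
    (fun m => by have := hatf_continuous m; fun_prop)
    (telescope_summable hA h0)
  intro m v
  have hnn : 0 ≤ A m - A (m+1) := sub_nonneg.2 (hA (Nat.le_succ m))
  rw [Real.norm_eq_abs, abs_mul, abs_of_nonneg hnn, abs_of_nonneg (hatf_nonneg m v)]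
  calc (A m - A (m+1)) * hatf m v ≤ (A m - A (m+1)) * 1 :=
        mul_le_mul_of_nonneg_left (hatf_le_one m v) hnn
    _ = A m - A (m+1) := mul_one _

lemma envf_nonneg {A : ℕ → ℝ} (hA : Antitone A) (v : ℝ) : 0 ≤ envf A v :=
  tsum_nonneg (fun m => mul_nonneg (sub_nonneg.2 (hA (Nat.le_succ m))) (hatf_nonneg m v))

lemma envf_le {A : ℕ → ℝ} (hA : Antitone A) (h0 : ∀ m, 0 ≤ A m)
    (hlim : Tendsto A atTop (nhds 0)) {K : ℕ} {v : ℝ} (hv : (K:ℝ) ≤ v) :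
    envf A v ≤ A K := by
  have hHS := hasSum_max hA hlim K
  rw [← hHS.tsum_eq]
  apply Summable.tsum_le_tsum _ (envf_summable hA h0 v) hHS.summable
  intro m
  rcases lt_or_ge m K with hm | hm
  · have h1 : (m:ℝ) + 1 ≤ v := le_trans (by exact_mod_cast Nat.succ_le_of_lt hm) hv
    rw [hatf_eq_zero h1, mul_zero]
    exact sub_nonneg.2 (hA (max_le_max (Nat.le_succ m) le_rfl))
  · rw [max_eq_left hm, max_eq_left (le_trans hm (Nat.le_succ m))]
    calc (A m - A (m+1)) * hatf m v ≤ (A m - A (m+1)) * 1 :=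
          mul_le_mul_of_nonneg_left (hatf_le_one m v) (sub_nonneg.2 (hA (Nat.le_succ m)))
      _ = A m - A (m+1) := mul_one _

lemma envf_eq {A : ℕ → ℝ} (hA : Antitone A) (hlim : Tendsto A atTop (nhds 0)) (K : ℕ) :
    envf A (K:ℝ) = A K := by
  have hHS := hasSum_max hA hlim K
  rw [← hHS.tsum_eq]
  unfold envf
  congr 1
  funext m
  rcases lt_or_ge m K with hm | hm
  · rw [hatf_eq_zero (by exact_mod_cast Nat.succ_le_of_lt hm), mul_zero,
      max_eq_right (le_of_lt hm), max_eq_right (Nat.succ_le_of_lt hm), sub_self]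
  · rw [hatf_eq_one (by exact_mod_cast hm), mul_one,
      max_eq_left hm, max_eq_left (le_trans hm (Nat.le_succ m))]

lemma sign_lemma {x y : ℝ} (h : |x - y| < |x|) : 0 < x * y := by
  obtain ⟨h1, h2⟩ := abs_lt.mp h
  rcases le_or_gt 0 x with hx | hx
  · rw [abs_of_nonneg hx] at h1 h2
    have hy : 0 < y := by linarith
    have hx' : 0 < x := by linarith
    exact mul_pos hx' hy
  · rw [abs_of_neg hx] at h1 h2
    have hy : y < 0 := by linarith
    exact mul_pos_of_neg_of_neg hx hy

lemma mono_of_lt_succ {y : ℕ → ℝ} {N : ℕ} (h : ∀ j, j+1 < N → y j < y (j+1)) :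
    ∀ j j', j ≤ j' → j' < N → y j ≤ y j' := by
  intro j j' hle
  induction j', hle using Nat.le_induction with
  | base => intro _; exact le_rfl
  | succ m hjm ih =>
    intro hlt
    exact le_trans (ih (Nat.lt_of_succ_lt hlt)) (le_of_lt (h m hlt))

lemma exists_piece {r : ℕ} {a b x : ℝ} (t : Fin (r+2) → ℝ) (ht : Monotone t)
    (h0 : t 0 = a) (hl : t (Fin.last (r+1)) = b) (hx : x ∈ Set.Icc a b) :
    ∃ k : Fin (r+1), t k.castSucc ≤ x ∧ x ≤ t k.succ := by
  classical
  have h0' : t ((0 : Fin (r+1)).castSucc) ≤ x := by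
    have : ((0 : Fin (r+1)).castSucc) = (0 : Fin (r+2)) := rfl
    rw [this, h0]; exact hx.1
  set S := Finset.univ.filter (fun k : Fin (r+1) => t k.castSucc ≤ x) with hS
  have hne : S.Nonempty := ⟨0, Finset.mem_filter.mpr ⟨Finset.mem_univ _, h0'⟩⟩
  set k := S.max' hne with hk
  have hk1 : t k.castSucc ≤ x := by
    have := S.max'_mem hne
    simp only [hS, Finset.mem_filter] at this
    exact this.2
  refine ⟨k, hk1, ?_⟩
  by_cases hkr : (k : ℕ) = r
  · have : k.succ = Fin.last (r+1) := by
      apply Fin.ext; simp [Fin.val_last, hkr]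
    rw [this, hl]; exact hx.2
  · have hklt : (k:ℕ) < r := lt_of_le_of_ne (Nat.lt_succ_iff.mp k.isLt) hkr
    set k2 : Fin (r+1) := ⟨(k:ℕ)+1, by omega⟩ with hk2
    have hgt : k < k2 := by simp [Fin.lt_def, hk2]
    have hnot : k2 ∉ S := fun h => absurd (S.le_max' k2 h) (not_le.mpr hgt)
    have h2 : ¬ t k2.castSucc ≤ x := by
      intro hc; exact hnot (by simp [hS, hc])
    have hcast : k2.castSucc = k.succ := by
      apply Fin.ext; simp [hk2]
    rw [← hcast]
    exact le_of_lt (not_le.mp h2)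

lemma no_alternation {n r : ℕ} {a b : ℝ} {s : ℝ → ℝ} (hs : s ∈ SplineSet n r a b)
    (y : ℕ → ℝ) (hmem : ∀ j, j < (n+1)*(r+1)+2 → y j ∈ Set.Icc a b)
    (hmono : ∀ j, j+1 < (n+1)*(r+1)+2 → y j < y (j+1))
    (halt : ∀ j, j+1 < (n+1)*(r+1)+2 → s (y j) * s (y (j+1)) < 0) : False := by
  classical
  obtain ⟨t, htm, ht0, htl, hp⟩ := hs
  set N := (n+1)*(r+1)+2 with hN
  have hN0 : 0 < N := by positivity
  -- replace y by a version that's in Icc for all indices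
  set y' : ℕ → ℝ := fun j => if j < N then y j else y 0 with hy'
  have hy'mem : ∀ j, y' j ∈ Set.Icc a b := by
    intro j
    by_cases h : j < N
    · simp only [hy', if_pos h]; exact hmem j h
    · simp only [hy', if_neg h]; exact hmem 0 hN0
  have hy'eq : ∀ j, j < N → y' j = y j := fun j h => by simp only [hy', if_pos h]
  choose K hK1 hK2 using fun j => exists_piece t htm ht0 htl (hy'mem j)
  -- pigeonhole
  have hcard : (Finset.univ : Finset (Fin (r+1))).card * (n+1) < (Finset.range N).card := by
    simp [hN]
    nlinarith [Nat.zero_le n, Nat.zero_le r]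
  obtain ⟨k0, -, hfib⟩ := Finset.exists_lt_card_fiber_of_mul_lt_card_of_maps_to
    (f := K) (fun j (_ : j ∈ Finset.range N) => Finset.mem_univ (K j)) hcard
  set F := (Finset.range N).filter (fun j => K j = k0) with hF
  have hFne : F.Nonempty := Finset.card_pos.mp (by omega)
  set j0 := F.min' hFne with hj0
  set j1 := F.max' hFne with hj1
  have hj0F : j0 ∈ F := F.min'_mem hFne
  have hj1F : j1 ∈ F := F.max'_mem hFne
  have hj1N : j1 < N := Finset.mem_range.mp (Finset.mem_filter.mp hj1F).1
  have hj0N : j0 < N := Finset.mem_range.mp (Finset.mem_filter.mp hj0F).1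
  have hsub : F ⊆ Finset.Icc j0 j1 := fun x hx =>
    Finset.mem_Icc.mpr ⟨F.min'_le x hx, F.le_max' x hx⟩
  have hcardIcc : F.card ≤ j1 - j0 + 1 := by
    have := Finset.card_le_card hsub
    rwa [Nat.card_Icc, Nat.succ_sub (F.min'_le j1 hj1F)] at this
  have hgap : j0 + (n+1) ≤ j1 := by omega
  obtain ⟨p, hpdeg, hpeval⟩ := hp k0
  have hKj0 : K j0 = k0 := (Finset.mem_filter.mp hj0F).2
  have hKj1 : K j1 = k0 := (Finset.mem_filter.mp hj1F).2
  -- all y j for j0 ≤ j ≤ j1 are in the piece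
  have hymem : ∀ j, j0 ≤ j → j ≤ j1 → y j ∈ Set.Icc (t k0.castSucc) (t k0.succ) := by
    intro j hle hge
    have hjN : j < N := lt_of_le_of_lt hge hj1N
    constructor
    · calc t k0.castSucc ≤ y' j0 := by rw [← hKj0]; exact hK1 j0
        _ = y j0 := hy'eq j0 hj0N
        _ ≤ y j := mono_of_lt_succ hmono j0 j hle hjN
    · calc y j ≤ y j1 := mono_of_lt_succ hmono j j1 hge hj1N
        _ = y' j1 := (hy'eq j1 hj1N).symm
        _ ≤ t k0.succ := by rw [← hKj1]; exact hK2 j1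
  have hse : ∀ j, j0 ≤ j → j ≤ j1 → s (y j) = p.eval (y j) := fun j h1 h2 =>
    hpeval (y j) (hymem j h1 h2)
  -- roots between consecutive alternation points
  have hroot : ∀ l : Fin (n+1), ∃ z,
      z ∈ Set.Ioo (y (j0 + (l:ℕ))) (y (j0 + (l:ℕ) + 1)) ∧ p.eval z = 0 := by
    intro l
    have hl : (l:ℕ) ≤ n := Nat.lt_succ_iff.mp l.isLt
    have h1 : j0 + (l:ℕ) + 1 ≤ j1 := by omega
    have h1N : j0 + (l:ℕ) + 1 < N := lt_of_le_of_lt h1 hj1N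
    have halt' : p.eval (y (j0 + (l:ℕ))) * p.eval (y (j0 + (l:ℕ) + 1)) < 0 := by
      rw [← hse _ (by omega) (by omega), ← hse _ (by omega) h1]
      exact halt _ h1N
    have hylt : y (j0 + (l:ℕ)) < y (j0 + (l:ℕ) + 1) := hmono _ h1N
    have hcont : ContinuousOn (fun x => p.eval x)
        (Set.Icc (y (j0 + (l:ℕ))) (y (j0 + (l:ℕ) + 1))) :=
      (Polynomial.continuous p).continuousOn
    rcases mul_neg_iff.mp halt' with ⟨ha, hb⟩ | ⟨ha, hb⟩
    · have := intermediate_value_Ioo' (le_of_lt hylt) hcont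
      obtain ⟨z, hz, hz0⟩ := this (Set.mem_Ioo.mpr ⟨hb, ha⟩)
      exact ⟨z, hz, hz0⟩
    · have := intermediate_value_Ioo (le_of_lt hylt) hcont
      obtain ⟨z, hz, hz0⟩ := this (Set.mem_Ioo.mpr ⟨ha, hb⟩)
      exact ⟨z, hz, hz0⟩
  choose z hz1 hz2 using hroot
  -- z is injective
  have hzmono : ∀ l l' : Fin (n+1), l < l' → z l < z l' := by
    intro l l' hll
    have h1 : (l:ℕ) + 1 ≤ (l':ℕ) := hll
    have h2 : j0 + (l':ℕ) + 1 ≤ j1 := by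
      have : (l':ℕ) ≤ n := Nat.lt_succ_iff.mp l'.isLt
      omega
    calc z l < y (j0 + (l:ℕ) + 1) := (hz1 l).2
      _ ≤ y (j0 + (l':ℕ)) := mono_of_lt_succ hmono _ _ (by omega)
          (by omega)
      _ < z l' := (hz1 l').1
  have hzinj : Function.Injective z := by
    intro l l' h
    by_contra hne
    rcases lt_or_gt_of_ne hne with hlt | hlt
    · exact absurd h (ne_of_lt (hzmono l l' hlt))
    · exact absurd h.symm (ne_of_lt (hzmono l' l hlt))
  -- p ≠ 0
  have hp0 : p ≠ 0 := by
    intro hp0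
    have := hz2 0
    have halt0 : p.eval (y j0) * p.eval (y (j0 + 1)) < 0 := by
      rw [← hse _ le_rfl (by omega), ← hse _ (by omega) (by omega)]
      exact halt j0 (by omega)
    rw [hp0] at halt0
    simp at halt0
  -- count roots
  have hZsub : Finset.image z Finset.univ ⊆ p.roots.toFinset := by
    intro w hw
    obtain ⟨l, -, rfl⟩ := Finset.mem_image.mp hw
    rw [Multiset.mem_toFinset, Polynomial.mem_roots hp0]
    exact hz2 l
  have hcount : n + 1 ≤ p.natDegree := by
    calc n + 1 = (Finset.image z Finset.univ).card := by
          rw [Finset.card_image_of_injective _ hzinj, Finset.card_univ, Fintype.card_fin]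
      _ ≤ p.roots.toFinset.card := Finset.card_le_card hZsub
      _ ≤ Multiset.card p.roots := p.roots.toFinset_card_le
      _ ≤ p.natDegree := p.card_roots'
  omega

/-- On `I = [a, b]` with `a < b`, for any sequences `(n_i)`, `(r_i)` of
naturals and any null sequence `(ε_i)`, there is a continuous `f : I → ℝ` with
`inf_{s ∈ 𝓢_{n_i,r_i}(I) ∩ C(I)} sup_{t ∈ I} |f t - s t| ≥ ε_i` for all `i ≥ 1`. -/
theorem spline_negative_uniform (a b : ℝ) (hab : a < b) (n r : ℕ → ℕ)
    (ε : ℕ → ℝ) (hε : Filter.Tendsto ε Filter.atTop (nhds 0)) :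
    ∃ f : ℝ → ℝ, ContinuousOn f (Set.Icc a b) ∧
      ∀ i : ℕ, 1 ≤ i → ∀ s ∈ SplineSet (n i) (r i) a b, ContinuousOn s (Set.Icc a b) →
        ε i ≤ sSup ((fun t => |f t - s t|) '' Set.Icc a b) := by
  classical
  set N' : ℕ → ℕ := fun i => (n i + 1) * (r i + 1) + 3 with hN'
  set E : ℕ → ℝ := fun i => |ε i| with hE
  -- the amplitude sequence
  set A : ℕ → ℝ := fun m => sSup (insert 0 (E '' {i | 1 ≤ i ∧ m ≤ N' i})) with hA
  have hEbdd : ∃ C, ∀ i, E i ≤ C := by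
    obtain ⟨C, hCb⟩ := hε.abs.bddAbove_range
    exact ⟨C, fun i => hCb (Set.mem_range_self i)⟩
  obtain ⟨C, hC⟩ := hEbdd
  have hAbdd : ∀ m, BddAbove (insert 0 (E '' {i | 1 ≤ i ∧ m ≤ N' i})) := by
    intro m
    refine ⟨max C 0, fun x hx => ?_⟩
    rcases Set.mem_insert_iff.mp hx with rfl | ⟨i, _, rfl⟩
    · exact le_max_right _ _
    · exact le_trans (hC i) (le_max_left _ _)
  have hAnonneg : ∀ m, 0 ≤ A m := fun m => le_csSup (hAbdd m) (Set.mem_insert _ _)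
  have hAanti : Antitone A := by
    intro m m' hmm
    apply csSup_le_csSup (hAbdd m) ⟨0, Set.mem_insert _ _⟩
    apply Set.insert_subset_insert
    apply Set.image_mono
    intro i hi
    exact ⟨hi.1, le_trans hmm hi.2⟩
  have hAge : ∀ i, 1 ≤ i → ∀ m, m ≤ N' i → ε i ≤ A m := by
    intro i hi m hm
    refine le_trans (le_abs_self _) (le_csSup (hAbdd m) ?_)
    exact Set.mem_insert_of_mem _ ⟨i, ⟨hi, hm⟩, rfl⟩
  have hAlim : Tendsto A atTop (nhds 0) := by
    rw [Metric.tendsto_atTop]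
    intro δ hδ
    have := hε.abs
    simp only [abs_zero] at this
    obtain ⟨I, hI⟩ := Metric.tendsto_atTop.mp this (δ/2) (by linarith)
    refine ⟨1 + (Finset.range I).sup N', fun m hm => ?_⟩
    have hle : A m ≤ δ/2 := by
      apply csSup_le ⟨0, Set.mem_insert _ _⟩
      intro x hx
      rcases Set.mem_insert_iff.mp hx with rfl | ⟨i, ⟨hi1, hi2⟩, rfl⟩
      · linarith
      · have hiI : I ≤ i := by
          by_contra hc
          push_neg at hc
          have := Finset.le_sup (f := N') (Finset.mem_range.mpr hc)
          omega
        have := hI i hiI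
        rw [Real.dist_eq, sub_zero] at this
        have : |ε i| < δ/2 := by simpa [abs_abs] using this
        exact le_of_lt this
    rw [Real.dist_eq, sub_zero, abs_of_nonneg (hAnonneg m)]
    linarith
  -- the function
  set D := b - a with hD
  have hDpos : 0 < D := sub_pos.mpr hab
  set u : ℝ → ℝ := fun x => D / (b - x) with hu
  set f : ℝ → ℝ := fun x => if x < b then envf A (u x) * Real.cos (π * u x) else 0 with hf
  set Y : ℕ → ℝ := fun j => b - D / ((j:ℝ)+2) with hY
  have hYlt : ∀ j, Y j < b := by
    intro j
    simp only [hY]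
    have : 0 < D / ((j:ℝ)+2) := div_pos hDpos (by positivity)
    linarith
  have hYa : ∀ j, a ≤ Y j := by
    intro j
    simp only [hY]
    have hj0 : (0:ℝ) ≤ (j:ℝ) := Nat.cast_nonneg j
    have h2 : D / ((j:ℝ)+2) ≤ D := div_le_self hDpos.le (by linarith)
    simp only [hD] at *
    linarith
  have hYmono : ∀ j, Y j < Y (j+1) := by
    intro j
    simp only [hY]
    have : D / ((j:ℝ)+1+2) < D / ((j:ℝ)+2) :=
      div_lt_div_of_pos_left hDpos (by positivity) (by push_cast; linarith)
    push_cast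
    linarith
  have huY : ∀ j, u (Y j) = (j:ℝ)+2 := by
    intro j
    simp only [hu, hY]
    rw [show b - (b - D / ((j:ℝ)+2)) = D / ((j:ℝ)+2) by ring]
    rw [div_div_eq_mul_div, mul_comm, mul_div_assoc, div_self (ne_of_gt hDpos), mul_one]
  have hfY : ∀ j, f (Y j) = A (j+2) * (-1:ℝ)^j := by
    intro j
    simp only [hf, if_pos (hYlt j), huY j]
    have h1 : envf A ((j:ℝ)+2) = A (j+2) := by
      have := envf_eq hAanti hAlim (j+2)
      rwa [show ((j+2:ℕ):ℝ) = (j:ℝ)+2 by push_cast; ring] at this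
    have h2 : Real.cos (π * ((j:ℝ)+2)) = (-1:ℝ)^j := by
      have := Real.cos_nat_mul_pi_sub 0 (j+2)
      rw [sub_zero, Real.cos_zero, mul_one] at this
      rw [show π * ((j:ℝ)+2) = ((j+2:ℕ):ℝ) * π by push_cast; ring, this]
      rw [pow_add]
      norm_num
    rw [h1, h2]
  -- continuity
  have hfcont : ContinuousOn f (Set.Icc a b) := by
    intro x hx
    rcases eq_or_lt_of_le hx.2 with heq | hlt
    · -- x = b
      subst heq
      have hfb : f x = 0 := by simp [hf]
      rw [ContinuousWithinAt, hfb]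
      rw [Metric.tendsto_nhdsWithin_nhds]
      intro δ hδ
      obtain ⟨k, hk⟩ := (Metric.tendsto_atTop.mp hAlim δ hδ)
      have hk' : A (k+1) < δ := by
        have := hk (k+1) (Nat.le_succ k)
        rwa [Real.dist_eq, sub_zero, abs_of_nonneg (hAnonneg _)] at this
      refine ⟨D / ((k:ℝ)+1), div_pos hDpos (by positivity), fun {w} hw hdist => ?_⟩
      rcases eq_or_lt_of_le hw.2 with heq2 | hlt2
      · subst heq2
        simp [hf, Real.dist_eq, hδ]
      · have hwb : 0 < x - w := sub_pos.mpr hlt2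
        rw [Real.dist_eq, abs_of_nonpos (by linarith)] at hdist
        have hwdist : x - w < D / ((k:ℝ)+1) := by linarith
        have huw : ((k:ℝ)+1) ≤ u w := by
          simp only [hu]
          rw [le_div_iff₀ hwb]
          have := (lt_div_iff₀ (show (0:ℝ) < (k:ℝ)+1 by positivity)).mp hwdist
          nlinarith
        have hub : envf A (u w) ≤ A (k+1) := by
          have := envf_le hAanti hAnonneg hAlim (K := k+1) (v := u w)
            (by push_cast; linarith)
          exact this
        rw [Real.dist_eq, sub_zero]
        have hfw : f w = envf A (u w) * Real.cos (π * u w) := by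
          simp [hf, if_pos hlt2]
        rw [hfw, abs_mul]
        calc |envf A (u w)| * |Real.cos (π * u w)| ≤ |envf A (u w)| * 1 :=
              mul_le_mul_of_nonneg_left (Real.abs_cos_le_one _) (abs_nonneg _)
          _ = envf A (u w) := by rw [mul_one, abs_of_nonneg (envf_nonneg hAanti _)]
          _ ≤ A (k+1) := hub
          _ < δ := hk'
    · -- x < b
      apply ContinuousAt.continuousWithinAt
      have hune : b - x ≠ 0 := ne_of_gt (sub_pos.mpr hlt)
      have hucont : ContinuousAt u x := by
        apply ContinuousAt.div continuousAt_const (by fun_prop) hune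
      have hFcont : ContinuousAt (fun w => envf A (u w) * Real.cos (π * u w)) x := by
        exact (((envf_continuous hAanti hAnonneg).continuousAt).comp hucont).mul
          ((Real.continuous_cos.continuousAt).comp (continuousAt_const.mul hucont))
      apply hFcont.congr
      filter_upwards [isOpen_Iio.mem_nhds hlt] with w hw
      simp only [hf]
      rw [if_pos (Set.mem_Iio.mp hw)]
  refine ⟨f, hfcont, ?_⟩
  intro i hi s hsSpl hsC
  set M := sSup ((fun t => |f t - s t|) '' Set.Icc a b) with hM
  have hbdd : BddAbove ((fun t => |f t - s t|) '' Set.Icc a b) :=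
    IsCompact.bddAbove_image isCompact_Icc ((hfcont.sub hsC).abs)
  have hM0 : 0 ≤ M := by
    refine le_trans (abs_nonneg (f a - s a)) (le_csSup hbdd ?_)
    exact ⟨a, Set.mem_Icc.mpr ⟨le_refl a, le_of_lt hab⟩, rfl⟩
  by_contra hcon
  push_neg at hcon
  have hεpos : 0 < ε i := lt_of_le_of_lt hM0 hcon
  set Nb := (n i + 1) * (r i + 1) + 2 with hNb
  have hMle : ∀ j, |f (Y j) - s (Y j)| ≤ M := by
    intro j
    exact le_csSup hbdd ⟨Y j, Set.mem_Icc.mpr ⟨hYa j, (hYlt j).le⟩, rfl⟩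
  have hAj : ∀ j, j < Nb → ε i ≤ A (j+2) := by
    intro j hj
    apply hAge i hi
    simp only [hN', hNb] at *
    omega
  have habsf : ∀ j, |f (Y j)| = A (j+2) := by
    intro j
    rw [hfY j, abs_mul, abs_pow, abs_neg, abs_one, one_pow, mul_one,
      abs_of_nonneg (hAnonneg _)]
  have hsign : ∀ j, j < Nb → 0 < f (Y j) * s (Y j) := by
    intro j hj
    apply sign_lemma
    calc |f (Y j) - s (Y j)| ≤ M := hMle j
      _ < ε i := hcon
      _ ≤ A (j+2) := hAj j hj
      _ = |f (Y j)| := (habsf j).symm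
  have hfalt : ∀ j, j+1 < Nb → f (Y j) * f (Y (j+1)) < 0 := by
    intro j hj
    rw [hfY j, hfY (j+1)]
    have h2 : 0 < A (j+2) := lt_of_lt_of_le hεpos (hAj j (by omega))
    have h3 : 0 < A (j+1+2) := lt_of_lt_of_le hεpos (hAj (j+1) hj)
    have hpow : ((-1:ℝ)^j) * ((-1:ℝ)^(j+1)) = -1 := by
      rw [← pow_add]
      exact Odd.neg_one_pow ⟨j, by omega⟩
    have heq : (A (j+2) * (-1:ℝ)^j) * (A (j+1+2) * (-1:ℝ)^(j+1))
        = (A (j+2) * A (j+1+2)) * (((-1:ℝ)^j) * ((-1:ℝ)^(j+1))) := by ring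
    rw [heq, hpow, mul_neg_one, neg_lt_zero]
    exact mul_pos h2 h3
  have hsalt : ∀ j, j+1 < Nb → s (Y j) * s (Y (j+1)) < 0 := by
    intro j hj
    have h1 := hsign j (by omega)
    have h2 := hsign (j+1) hj
    have h3 := hfalt j hj
    nlinarith [mul_pos h1 h2]
  exact no_alternation hsSpl Y
    (fun j _ => Set.mem_Icc.mpr ⟨hYa j, (hYlt j).le⟩)
    (fun j _ => hYmono j)
    hsalt


end auxSpline
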